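/- Let f_1, f_2 be functions in the Nevanlinna class N and let B̂ be the Blaschke product formed with the common zeros of f_1 and f_2 (so that f_1/B̂ and f_2/B̂ belong to N and have no common zeros). Then I(f_1,f_2) = J(f_1,f_2) if and only if I(f_1/B̂, f_2/B̂) = J(f_1/B̂, f_2/B̂). -/

import Mathlib

open Complex Metric Set Filter

noncomputable section

/-- The open unit disk in `ℂ`. -/
def unitDisk : Set ℂ := {z : ℂ | ‖z‖ < 1}

/-- A real-valued function is harmonic on a set `Ω ⊆ ℂ` if, near every point of `Ω`,
it is the real part of a holomorphic function. -/
def HarmonicOnSet (u : ℂ → ℝ) (Ω : Set ℂ) : Prop :=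
  ∀ z ∈ Ω, ∃ r > 0, Metric.ball z r ⊆ Ω ∧
    ∃ F : ℂ → ℂ, DifferentiableOn ℂ F (Metric.ball z r) ∧
      ∀ w ∈ Metric.ball z r, u w = (F w).re

/-- A positive harmonic function on the unit disk. -/
def PosHarmonic (H : ℂ → ℝ) : Prop :=
  HarmonicOnSet H unitDisk ∧ ∀ z ∈ unitDisk, 0 < H z

/-- The pseudohyperbolic distance `ρ(z,w) = |z - w| / |1 - z̄ w|`. -/
def pd (z w : ℂ) : ℝ := ‖z - w‖ / ‖1 - (starRingEnd ℂ) z * w‖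

/-- The open pseudohyperbolic disk `D(a,r)`. -/
def pBall (a : ℂ) (r : ℝ) : Set ℂ := {w ∈ unitDisk | pd a w < r}

/-- The closed pseudohyperbolic disk. -/
def pClosedBall (a : ℂ) (r : ℝ) : Set ℂ := {w ∈ unitDisk | pd a w ≤ r}

/-- An individual Blaschke factor with zero `a`. -/
def blaschkeFactor (a z : ℂ) : ℂ :=
  if a = 0 then z
  else ((starRingEnd ℂ) a / (‖a‖ : ℂ)) * ((a - z) / (1 - (starRingEnd ℂ) a * z))

/-- The Blaschke product with zero sequence `Λ`. -/
def blaschkeProduct (Λ : ℕ → ℂ) (z : ℂ) : ℂ := ∏' n, blaschkeFactor (Λ n) z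

/-- A Blaschke sequence: a sequence in the unit disk satisfying the Blaschke condition. -/
def BlaschkeSeq (Λ : ℕ → ℂ) : Prop :=
  (∀ n, Λ n ∈ unitDisk) ∧ Summable fun n => 1 - ‖Λ n‖

/-- The Nevanlinna class: holomorphic functions on the disk such that `log⁺ |f|`
has a positive harmonic majorant. -/
def Nev (f : ℂ → ℂ) : Prop :=
  DifferentiableOn ℂ f unitDisk ∧
  ∃ H : ℂ → ℝ, PosHarmonic H ∧ ∀ z ∈ unitDisk, Real.log (‖f z‖) ≤ H z

/-- `Λ` is an interpolating sequence for the Nevanlinna class. -/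
def NevInterpolating (Λ : ℕ → ℂ) : Prop :=
  Function.Injective Λ ∧ (∀ n, Λ n ∈ unitDisk) ∧
  ∃ H : ℂ → ℝ, PosHarmonic H ∧
    ∀ n, Real.exp (-H (Λ n)) ≤ ∏' k : {k : ℕ // k ≠ n}, pd (Λ k.1) (Λ n)

/-- A Nevanlinna interpolating Blaschke product. -/
def NevInterpBlaschke (B : ℂ → ℂ) : Prop :=
  ∃ Λ : ℕ → ℂ, NevInterpolating Λ ∧ B = blaschkeProduct Λ

/-- The ideal generated by `f 0, …, f (m-1)` in the Nevanlinna class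
(membership being recorded through the values on the unit disk). -/
def idealI (m : ℕ) (f : Fin m → ℂ → ℂ) : Set (ℂ → ℂ) :=
  {g | ∃ h : Fin m → ℂ → ℂ, (∀ i, Nev (h i)) ∧
        ∀ z ∈ unitDisk, g z = ∑ i, f i z * h i z}

/-- The set `J(f 0, …, f (m-1))`. -/
def idealJ (m : ℕ) (f : Fin m → ℂ → ℂ) : Set (ℂ → ℂ) :=
  {g | Nev g ∧ ∃ H : ℂ → ℝ, PosHarmonic H ∧
        ∀ z ∈ unitDisk,
          ‖g z‖ ≤ Real.exp (H z) * ∑ i, ‖f i z‖}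

/-- The ideal generated by a pair `f₁, f₂` in the Nevanlinna class. -/
def idealI2 (f₁ f₂ : ℂ → ℂ) : Set (ℂ → ℂ) :=
  {g | ∃ h₁ h₂ : ℂ → ℂ, Nev h₁ ∧ Nev h₂ ∧
        ∀ z ∈ unitDisk, g z = f₁ z * h₁ z + f₂ z * h₂ z}

/-- The set `J(f₁, f₂)`. -/
def idealJ2 (f₁ f₂ : ℂ → ℂ) : Set (ℂ → ℂ) :=
  {g | Nev g ∧ ∃ H : ℂ → ℝ, PosHarmonic H ∧
        ∀ z ∈ unitDisk,
          ‖g z‖ ≤ Real.exp (H z) * (‖f₁ z‖ + ‖f₂ z‖)}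

/-- Harmonic measure, at `z`, of the outer boundary `∂𝔻` in a subdomain `Ω` of the unit
disk, described à la Perron: the supremum of the values `u z` of harmonic functions
`0 ≤ u ≤ 1` on `Ω` whose boundary limits superior vanish at all boundary points of `Ω`
lying inside the unit disk. -/
def hmOuter (Ω : Set ℂ) (z : ℂ) : ℝ :=
  sSup {t : ℝ | ∃ u : ℂ → ℝ, HarmonicOnSet u Ω ∧
    (∀ w ∈ Ω, 0 ≤ u w ∧ u w ≤ 1) ∧
    (∀ ζ ∈ frontier Ω, ‖ζ‖ < 1 →
      ∀ ε > 0, ∀ᶠ w in nhdsWithin ζ Ω, u w ≤ ε) ∧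
    t = u z}

/-- The domain `Ω_n^H`: the unit disk minus the (closed) pseudohyperbolic disks
`𝒟_k^H = D(λ_k, e^{-H(λ_k)})` over the `k ≠ n` with `ρ(λ_k, λ_n) ≤ 1/2`. -/
def omegaDom (Λ : ℕ → ℂ) (H : ℂ → ℝ) (n : ℕ) : Set ℂ :=
  unitDisk \ ⋃ k ∈ {k : ℕ | k ≠ n ∧ pd (Λ k) (Λ n) ≤ 1/2},
    pClosedBall (Λ k) (Real.exp (-H (Λ k)))

/-- A function invertible in the Nevanlinna class. -/
def NevInvertible (g : ℂ → ℂ) : Prop :=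
  Nev g ∧ ∃ h : ℂ → ℂ, Nev h ∧ ∀ z ∈ unitDisk, g z * h z = 1

/-! ### Auxiliary lemmas -/


open Topology

lemma unitDisk_eq : unitDisk = Metric.ball (0:ℂ) 1 := by
  ext z; simp [unitDisk, Metric.mem_ball, Complex.dist_eq]

lemma isOpen_unitDisk : IsOpen unitDisk := unitDisk_eq ▸ Metric.isOpen_ball

lemma isPreconnected_unitDisk : IsPreconnected unitDisk :=
  unitDisk_eq ▸ (convex_ball (0:ℂ) 1).isPreconnected

lemma normSq_key (a z : ℂ) :
    Complex.normSq (1 - (starRingEnd ℂ) a * z) - Complex.normSq (a - z)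
      = (1 - Complex.normSq a) * (1 - Complex.normSq z) := by
  simp [Complex.normSq_apply, Complex.sub_re, Complex.sub_im, Complex.mul_re, Complex.mul_im,
    Complex.conj_re, Complex.conj_im]
  ring

lemma denom_ne (a z : ℂ) (ha : norm a < 1) (hz : norm z < 1) :
    1 - (starRingEnd ℂ) a * z ≠ 0 := by
  intro h
  have : norm ((starRingEnd ℂ) a * z) < 1 := by
    rw [norm_mul, Complex.norm_conj]
    nlinarith [norm_nonneg a, norm_nonneg z]
  rw [sub_eq_zero] at h
  rw [← h] at this
  simp at this

lemma num_le_denom (a z : ℂ) (ha : norm a < 1) (hz : norm z < 1) :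
    norm (a - z) ≤ norm (1 - (starRingEnd ℂ) a * z) := by
  have h := normSq_key a z
  have h1 : Complex.normSq a < 1 := by rw [← Complex.sq_norm]; nlinarith [norm_nonneg a]
  have h2 : Complex.normSq z < 1 := by rw [← Complex.sq_norm]; nlinarith [norm_nonneg z]
  have hsq : norm (a - z) ^ 2 ≤ norm (1 - (starRingEnd ℂ) a * z) ^ 2 := by
    rw [Complex.sq_norm, Complex.sq_norm]; nlinarith
  exact (pow_le_pow_iff_left₀ (norm_nonneg _) (norm_nonneg _) two_ne_zero).mp hsq

lemma blaschkeFactor_abs_le_one {a z : ℂ} (ha : norm a < 1) (hz : norm z < 1) :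
    norm (blaschkeFactor a z) ≤ 1 := by
  unfold blaschkeFactor
  split_ifs with h
  · exact hz.le
  · rw [norm_mul, norm_div, norm_div, Complex.norm_conj, Complex.norm_real, Real.norm_eq_abs,
      _root_.abs_of_nonneg (norm_nonneg a), div_self (by simpa using h), one_mul]
    exact div_le_one_of_le₀ (num_le_denom a z ha hz) (norm_nonneg _)

lemma blaschkeFactor_ne_zero {a z : ℂ} (ha : norm a < 1) (hz : norm z < 1)
    (hne : z ≠ a) : blaschkeFactor a z ≠ 0 := by
  unfold blaschkeFactor
  split_ifs with h
  · simpa [h] using hne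
  · apply mul_ne_zero
    · apply div_ne_zero (by simpa using h) (by simpa using h)
    · apply div_ne_zero (sub_ne_zero.2 (Ne.symm hne)) (denom_ne a z ha hz)

lemma blaschkeFactor_abs (a z : ℂ) (h : a ≠ 0) :
    norm (blaschkeFactor a z)
      = norm (a - z) / norm (1 - (starRingEnd ℂ) a * z) := by
  rw [blaschkeFactor, if_neg h, norm_mul, norm_div, norm_div, Complex.norm_conj,
    Complex.norm_real, Real.norm_eq_abs, _root_.abs_of_nonneg (norm_nonneg a),
    div_self (by simpa using h), one_mul]

lemma one_sub_bf_abs_le (a : ℂ) (ha : norm a < 1) {t : ℝ} (ht0 : 0 < t) (ht : t < 1/2) :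
    1 - norm (blaschkeFactor a (t:ℂ)) ≤ 8 * (1 - norm a) := by
  have htabs : norm ((t:ℂ)) = t := by
    rw [Complex.norm_real, Real.norm_eq_abs, _root_.abs_of_nonneg ht0.le]
  by_cases h : a = 0
  · subst h
    have hb : blaschkeFactor 0 (t:ℂ) = (t:ℂ) := if_pos rfl
    rw [hb, htabs]
    simp only [norm_zero]
    nlinarith
  · rw [blaschkeFactor_abs a _ h]
    set D := norm (1 - (starRingEnd ℂ) a * (t:ℂ)) with hD
    set N := norm (a - (t:ℂ)) with hN
    have hann : 0 ≤ norm a := norm_nonneg a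
    have hDbig : 1/2 ≤ D := by
      have h1 : norm ((starRingEnd ℂ) a * (t:ℂ)) ≤ t := by
        rw [norm_mul, Complex.norm_conj, htabs]
        nlinarith
      have h2 : 1 - norm ((starRingEnd ℂ) a * (t:ℂ)) ≤ D := by
        have h3 := norm_sub_norm_le (1:ℂ) ((starRingEnd ℂ) a * (t:ℂ))
        simpa [hD] using h3
      linarith
    have hsq : D^2 - N^2 = (1 - Complex.normSq a) * (1 - t^2) := by
      rw [hD, hN, Complex.sq_norm, Complex.sq_norm, normSq_key]
      congr 1
      rw [← Complex.sq_norm, htabs]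
    have hNnn : 0 ≤ N := norm_nonneg _
    have haS : Complex.normSq a = (norm a)^2 := (Complex.sq_norm a).symm
    have e2 : 0 ≤ 1 - norm a := by linarith
    have e1 : (1 - Complex.normSq a) * (1 - t^2) ≤ 2*(1 - norm a) := by
      nlinarith [sq_nonneg (1 - norm a), mul_nonneg e2 (sq_nonneg t),
        mul_nonneg (mul_nonneg e2 hann) (sq_nonneg t)]
    have hkey : D - N ≤ 4 * (1 - norm a) := by
      by_contra hcon
      push_neg at hcon
      nlinarith [hsq, hDbig, hNnn, e2, e1]
    have hDpos : 0 < D := by linarith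
    have h6 : (1 - 8*(1 - norm a)) * D ≤ N := by nlinarith
    have h7 := (le_div_iff₀ hDpos).2 h6
    linarith

lemma exp_le_aux {r : ℝ} (h1 : 1/2 ≤ r) (h2 : r ≤ 1) : Real.exp (-(2*(1-r))) ≤ r := by
  have ha := Real.add_one_le_exp (2*(1-r))
  have hb : (0:ℝ) < Real.exp (2*(1-r)) := Real.exp_pos _
  have hc : Real.exp (2*(1-r)) * Real.exp (-(2*(1-r))) = 1 := by
    rw [← Real.exp_add]; simp
  nlinarith [Real.exp_pos (-(2*(1-r)))]

lemma prod_lower_bound (r : ℕ → ℝ) (hpos : ∀ n, 0 < r n) (hle : ∀ n, r n ≤ 1)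
    (hsum : Summable (fun n => 1 - r n)) :
    ∃ δ > 0, ∀ s : Finset ℕ, δ ≤ ∏ n ∈ s, r n := by
  have hnn : ∀ n, 0 ≤ 1 - r n := fun n => by linarith [hle n]
  have hfin : {n : ℕ | r n < 1/2}.Finite := by
    have h0 := hsum.tendsto_atTop_zero
    have : ∀ᶠ n in atTop, 1 - r n < 1/2 :=
      (h0.eventually (eventually_lt_nhds (by norm_num : (0:ℝ) < 1/2)))
    obtain ⟨N, hN⟩ := this.exists_forall_of_atTop
    exact Set.Finite.subset (Set.finite_Iio N) (fun n hn => by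
      by_contra h
      simp only [Set.mem_Iio, not_lt] at h
      have := hN n h
      simp only [Set.mem_setOf_eq] at hn
      linarith)
  set S : Finset ℕ := hfin.toFinset with hS
  set T : ℝ := ∑' n, (1 - r n) with hT
  have hSpos : 0 < ∏ n ∈ S, r n := Finset.prod_pos (fun n _ => hpos n)
  refine ⟨(∏ n ∈ S, r n) * Real.exp (-(2*T)), by positivity, fun s => ?_⟩
  rw [← Finset.prod_inter_mul_prod_diff s S]
  have h1 : ∏ n ∈ S, r n ≤ ∏ n ∈ s ∩ S, r n := by
    have hsub : s ∩ S ⊆ S := Finset.inter_subset_right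
    rw [← Finset.prod_sdiff hsub]
    have : ∏ n ∈ S \ (s ∩ S), r n ≤ 1 :=
      Finset.prod_le_one (fun n _ => (hpos n).le) (fun n _ => hle n)
    nlinarith [Finset.prod_pos (fun n (_ : n ∈ s ∩ S) => hpos n),
      Finset.prod_nonneg (fun n (_ : n ∈ S \ (s ∩ S)) => (hpos n).le)]
  have h2 : Real.exp (-(2*T)) ≤ ∏ n ∈ s \ S, r n := by
    calc Real.exp (-(2*T)) ≤ Real.exp (∑ n ∈ s \ S, -(2*(1 - r n))) := by
          apply Real.exp_le_exp.2
          have hst : ∑ n ∈ s \ S, (1 - r n) ≤ T := by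
            exact Summable.sum_le_tsum _ (fun n _ => hnn n) hsum
          have : ∑ n ∈ s \ S, -(2*(1 - r n)) = -(2 * ∑ n ∈ s \ S, (1 - r n)) := by
            rw [Finset.sum_neg_distrib, Finset.mul_sum]
          rw [this]
          linarith
      _ = ∏ n ∈ s \ S, Real.exp (-(2*(1 - r n))) := by rw [Real.exp_sum]
      _ ≤ ∏ n ∈ s \ S, r n := by
          apply Finset.prod_le_prod (fun n _ => (Real.exp_pos _).le)
          intro n hn
          apply exp_le_aux _ (hle n)
          have : ¬ (r n < 1/2) := by
            have := (Finset.mem_sdiff.1 hn).2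
            simpa [hS, Set.Finite.mem_toFinset] using this
          linarith
  calc (∏ n ∈ S, r n) * Real.exp (-(2*T)) ≤ (∏ n ∈ s ∩ S, r n) * (∏ n ∈ s \ S, r n) := by
        apply mul_le_mul h1 h2 (Real.exp_pos _).le
          (Finset.prod_nonneg (fun n _ => (hpos n).le))
    _ = _ := rfl

lemma blaschkeProduct_abs_le_one (Λ : ℕ → ℂ) (h : ∀ n, Λ n ∈ unitDisk) {z : ℂ}
    (hz : z ∈ unitDisk) : norm (blaschkeProduct Λ z) ≤ 1 := by
  by_cases hm : Multipliable (fun n => blaschkeFactor (Λ n) z)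
  · have hp := hm.hasProd
    have habs : Tendsto (fun s : Finset ℕ => norm (∏ n ∈ s, blaschkeFactor (Λ n) z))
        atTop (𝓝 (norm (blaschkeProduct Λ z))) :=
      (continuous_norm.continuousAt.tendsto.comp hp)
    refine le_of_tendsto habs (Eventually.of_forall fun s => ?_)
    rw [norm_prod]
    exact Finset.prod_le_one (fun n _ => norm_nonneg _)
      (fun n _ => blaschkeFactor_abs_le_one (h n) hz)
  · rw [blaschkeProduct, tprod_eq_one_of_not_multipliable hm]
    simp

lemma exists_blaschkeProduct_ne_zero {Λ : ℕ → ℂ} (hΛ : BlaschkeSeq Λ) :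
    ∃ z ∈ unitDisk, blaschkeProduct Λ z ≠ 0 := by
  have hcount : (Complex.ofReal ⁻¹' (Set.range Λ)).Countable :=
    (Set.countable_range Λ).preimage Complex.ofReal_injective
  have hunc : ¬ (Set.Ioo (0:ℝ) (1/2)).Countable := by
    intro h
    have := (Cardinal.le_aleph0_iff_set_countable.2 h)
    rw [Cardinal.mk_Ioo_real (by norm_num)] at this
    exact absurd this (not_le.2 Cardinal.aleph0_lt_continuum)
  have hns : ¬ (Set.Ioo (0:ℝ) (1/2) ⊆ Complex.ofReal ⁻¹' (Set.range Λ)) :=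
    fun hss => hunc (hcount.mono hss)
  obtain ⟨t, htIoo, htn⟩ := Set.not_subset.1 hns
  obtain ⟨ht0, ht⟩ := htIoo
  have htabs : norm ((t:ℂ)) = t := by
    rw [Complex.norm_real, Real.norm_eq_abs, _root_.abs_of_nonneg ht0.le]
  have htd : (t:ℂ) ∈ unitDisk := by
    simp only [unitDisk, Set.mem_setOf_eq, htabs]; linarith
  set r : ℕ → ℝ := fun n => norm (blaschkeFactor (Λ n) (t:ℂ)) with hr
  have hrpos : ∀ n, 0 < r n := by
    intro n
    have hne : (t:ℂ) ≠ Λ n := fun he => htn ⟨n, he.symm⟩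
    have := blaschkeFactor_ne_zero (hΛ.1 n) (by rw [htabs]; linarith : norm ((t:ℂ)) < 1) hne
    exact norm_pos_iff.mpr this
  have hrle : ∀ n, r n ≤ 1 := fun n =>
    blaschkeFactor_abs_le_one (hΛ.1 n) (by rw [htabs]; linarith)
  have hsum : Summable (fun n => 1 - r n) := by
    apply Summable.of_nonneg_of_le (fun n => by linarith [hrle n])
      (fun n => one_sub_bf_abs_le (Λ n) (hΛ.1 n) ht0 ht)
    exact (hΛ.2).mul_left 8
  obtain ⟨δ, hδ, hlb⟩ := prod_lower_bound r hrpos hrle hsum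
  refine ⟨(t:ℂ), htd, ?_⟩
  by_cases hm : Multipliable (fun n => blaschkeFactor (Λ n) (t:ℂ))
  · have hp := hm.hasProd
    have habs : Tendsto (fun s : Finset ℕ => norm (∏ n ∈ s, blaschkeFactor (Λ n) (t:ℂ)))
        atTop (𝓝 (norm (blaschkeProduct Λ (t:ℂ)))) :=
      (continuous_norm.continuousAt.tendsto.comp hp)
    have hge : δ ≤ norm (blaschkeProduct Λ (t:ℂ)) := by
      refine ge_of_tendsto habs (Eventually.of_forall fun s => ?_)
      rw [norm_prod]
      exact hlb s
    intro h0
    rw [h0] at hge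
    simp only [norm_zero] at hge
    linarith
  · rw [blaschkeProduct, tprod_eq_one_of_not_multipliable hm]
    exact one_ne_zero

/-! ### Harmonic and Nevanlinna helpers -/

lemma PosHarmonic.continuousAt {H : ℂ → ℝ} (h : PosHarmonic H) {z : ℂ} (hz : z ∈ unitDisk) :
    ContinuousAt H z := by
  obtain ⟨r, hr, hball, F, hF, hFr⟩ := h.1 z hz
  have hFc : ContinuousAt F z := (hF.differentiableAt
    ((Metric.isOpen_ball).mem_nhds (Metric.mem_ball_self hr))).continuousAt
  have : ContinuousAt (fun w => (F w).re) z := (Complex.continuous_re.continuousAt).comp hFc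
  apply this.congr
  filter_upwards [(Metric.isOpen_ball).mem_nhds (Metric.mem_ball_self hr)] with w hw
  exact (hFr w hw).symm

lemma posHarmonic_add {H₁ H₂ : ℂ → ℝ} (h₁ : PosHarmonic H₁) (h₂ : PosHarmonic H₂) :
    PosHarmonic (fun z => H₁ z + H₂ z) := by
  constructor
  · intro z hz
    obtain ⟨r₁, hr₁, hb₁, F₁, hF₁, hFr₁⟩ := h₁.1 z hz
    obtain ⟨r₂, hr₂, hb₂, F₂, hF₂, hFr₂⟩ := h₂.1 z hz
    refine ⟨min r₁ r₂, lt_min hr₁ hr₂, ?_, fun w => F₁ w + F₂ w, ?_, ?_⟩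
    · exact (Metric.ball_subset_ball (min_le_left _ _)).trans hb₁
    · exact DifferentiableOn.add
        (hF₁.mono (Metric.ball_subset_ball (min_le_left _ _)))
        (hF₂.mono (Metric.ball_subset_ball (min_le_right _ _)))
    · intro w hw
      show H₁ w + H₂ w = _
      rw [Complex.add_re, hFr₁ w (Metric.ball_subset_ball (min_le_left _ _) hw),
        hFr₂ w (Metric.ball_subset_ball (min_le_right _ _) hw)]
  · exact fun z hz => add_pos (h₁.2 z hz) (h₂.2 z hz)

lemma posHarmonic_const {c : ℝ} (hc : 0 < c) : PosHarmonic (fun _ => c) := by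
  refine ⟨fun z hz => ?_, fun _ _ => hc⟩
  obtain ⟨r, hr, hball⟩ := Metric.isOpen_iff.1 isOpen_unitDisk z hz
  exact ⟨r, hr, hball, fun _ => (c:ℂ), differentiableOn_const _, fun w _ => by simp⟩

lemma Nev.abs_le {f : ℂ → ℂ} (hf : Nev f) :
    ∃ H : ℂ → ℝ, PosHarmonic H ∧ ∀ z ∈ unitDisk, norm (f z) ≤ Real.exp (H z) := by
  obtain ⟨_, H, hH, hle⟩ := hf
  refine ⟨H, hH, fun z hz => ?_⟩
  rcases eq_or_lt_of_le (norm_nonneg (f z)) with h0 | h0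
  · rw [← h0]; exact (Real.exp_pos _).le
  · exact (Real.log_le_iff_le_exp h0).1 (hle z hz)

/-! ### Isolated zeros and factorization -/

lemma eventually_ne_of_ne {B : ℂ → ℂ} (hB : DifferentiableOn ℂ B unitDisk)
    (hBne : ∃ z ∈ unitDisk, B z ≠ 0) {z : ℂ} (hz : z ∈ unitDisk) :
    ∀ᶠ w in nhdsWithin z {z}ᶜ, B w ≠ 0 := by
  have hA : AnalyticOnNhd ℂ B unitDisk := hB.analyticOnNhd isOpen_unitDisk
  rcases (hA z hz).eventually_eq_zero_or_eventually_ne_zero with h | h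
  · exfalso
    obtain ⟨z₀, hz₀, hz₀ne⟩ := hBne
    have heq : Set.EqOn B 0 unitDisk :=
      hA.eqOn_zero_of_preconnected_of_eventuallyEq_zero isPreconnected_unitDisk hz h
    exact hz₀ne (heq hz₀)
  · exact h

lemma nevFactorization {B v : ℂ → ℂ} {φ : ℂ → ℝ}
    (hB : DifferentiableOn ℂ B unitDisk)
    (hBne : ∃ z ∈ unitDisk, B z ≠ 0)
    (hv : DifferentiableOn ℂ v unitDisk)
    (hφ : ContinuousOn φ unitDisk)
    (hbound : ∀ z ∈ unitDisk, norm (v z) ≤ φ z * norm (B z)) :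
    ∃ u : ℂ → ℂ, DifferentiableOn ℂ u unitDisk ∧
      (∀ z ∈ unitDisk, v z = B z * u z) ∧
      (∀ z ∈ unitDisk, norm (u z) ≤ φ z) := by
  classical
  set q : ℂ → ℂ := fun w => v w / B w with hq
  set u : ℂ → ℂ := fun z => if B z = 0 then limUnder (nhdsWithin z {z}ᶜ) q else q z
    with hu
  -- key technical fact: near each zero of B in the disk we can factor
  have hmain : ∀ z ∈ unitDisk, DifferentiableAt ℂ u z := by
    intro z hz
    by_cases hBz : B z = 0
    · -- removable singularity case
      have hev := eventually_ne_of_ne hB hBne hz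
      rw [eventually_nhdsWithin_iff] at hev
      have hdisk : ∀ᶠ w in nhds z, w ∈ unitDisk := isOpen_unitDisk.mem_nhds hz
      obtain ⟨r, hr, hball⟩ := Metric.mem_nhds_iff.1 (hev.and hdisk)
      -- on ball z r : w ≠ z → B w ≠ 0, and w ∈ unitDisk
      have hb2 : Metric.ball z (r/2) ∈ nhds z := Metric.ball_mem_nhds z (by linarith)
      -- bound for q on the punctured ball
      obtain ⟨C, hC⟩ := (isCompact_closedBall z (r/2)).exists_bound_of_continuousOn
        (hφ.mono (fun w hw => (hball (lt_of_le_of_lt (Metric.mem_closedBall.1 hw)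
          (by linarith) : w ∈ Metric.ball z r)).2))
      have hqb : ∀ w ∈ Metric.ball z (r/2) \ {z}, norm (q w) ≤ C := by
        intro w hw
        obtain ⟨hw1, hw2⟩ := hw
        have hwr : w ∈ Metric.ball z r := Metric.ball_subset_ball (by linarith) hw1
        have hwd := (hball hwr).2
        have hwB : B w ≠ 0 := (hball hwr).1 (by simpa using hw2)
        have hBpos : 0 < norm (B w) := by
          simpa [norm_pos_iff] using hwB
        have : norm (q w) ≤ φ w := by
          rw [hq]
          simp only [norm_div]
          rw [div_le_iff₀ hBpos]
          exact hbound w hwd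
        refine this.trans ?_
        have := hC w (Metric.ball_subset_closedBall hw1)
        calc φ w ≤ |φ w| := le_abs_self _
          _ ≤ C := by simpa [Real.norm_eq_abs] using this
      have hqd : DifferentiableOn ℂ q (Metric.ball z (r/2) \ {z}) := by
        intro w hw
        obtain ⟨hw1, hw2⟩ := hw
        have hwr : w ∈ Metric.ball z r := Metric.ball_subset_ball (by linarith) hw1
        have hwd := (hball hwr).2
        have hwB : B w ≠ 0 := (hball hwr).1 (by simpa using hw2)
        exact ((hv.differentiableAt (isOpen_unitDisk.mem_nhds hwd)).div
          (hB.differentiableAt (isOpen_unitDisk.mem_nhds hwd)) hwB).differentiableWithinAt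
      have hbdd : BddAbove (norm ∘ q '' (Metric.ball z (r/2) \ {z})) := by
        refine ⟨C, fun x hx => ?_⟩
        obtain ⟨w, hw, rfl⟩ := hx
        simpa using hqb w hw
      have hupd := Complex.differentiableOn_update_limUnder_of_bddAbove hb2 hqd hbdd
      -- u agrees with the updated function on the small ball
      have hagree : Set.EqOn u
          (Function.update q z (limUnder (nhdsWithin z {z}ᶜ) q)) (Metric.ball z (r/2)) := by
        intro w hw
        by_cases hwz : w = z
        · subst hwz
          simp [hu, hBz, Function.update_self]
        · have hwr : w ∈ Metric.ball z r := Metric.ball_subset_ball (by linarith) hw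
          have hwB : B w ≠ 0 := (hball hwr).1 hwz
          simp [hu, hwB, Function.update_of_ne hwz]
      have : DifferentiableAt ℂ
          (Function.update q z (limUnder (nhdsWithin z {z}ᶜ) q)) z :=
        (hupd z (Metric.mem_ball_self (by linarith))).differentiableAt hb2
      apply this.congr_of_eventuallyEq
      filter_upwards [hb2] with w hw using hagree hw
    · -- B z ≠ 0 : u = q near z
      have ho : IsOpen (unitDisk ∩ B ⁻¹' {0}ᶜ) :=
        (hB.continuousOn).isOpen_inter_preimage isOpen_unitDisk isOpen_compl_singleton
      have hmem : unitDisk ∩ B ⁻¹' {0}ᶜ ∈ nhds z := ho.mem_nhds ⟨hz, hBz⟩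
      have hqz : DifferentiableAt ℂ q z :=
        (hv.differentiableAt (isOpen_unitDisk.mem_nhds hz)).div
          (hB.differentiableAt (isOpen_unitDisk.mem_nhds hz)) hBz
      apply hqz.congr_of_eventuallyEq
      filter_upwards [hmem] with w hw
      have hwB : B w ≠ 0 := hw.2
      simp [hu, hwB]
  refine ⟨u, fun z hz => (hmain z hz).differentiableWithinAt, fun z hz => ?_, fun z hz => ?_⟩
  · -- v = B u
    by_cases hBz : B z = 0
    · have : norm (v z) = 0 := by
        have := hbound z hz
        rw [hBz] at this
        simp only [norm_zero, mul_zero] at this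
        exact le_antisymm this (norm_nonneg _)
      rw [hBz]
      simp only [zero_mul]
      exact norm_eq_zero.1 this
    · simp only [hu, hq, if_neg hBz]
      field_simp
  · -- |u| ≤ φ
    by_cases hBz : B z = 0
    · -- limit argument
      have hucont : ContinuousAt u z := (hmain z hz).continuousAt
      have hφcont : ContinuousAt φ z := hφ.continuousAt (isOpen_unitDisk.mem_nhds hz)
      have hev := eventually_ne_of_ne hB hBne hz
      have hdisk : ∀ᶠ w in nhdsWithin z {z}ᶜ, w ∈ unitDisk :=
        mem_nhdsWithin_of_mem_nhds (isOpen_unitDisk.mem_nhds hz)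
      have hevle : ∀ᶠ w in nhdsWithin z {z}ᶜ, norm (u w) ≤ φ w := by
        filter_upwards [hev, hdisk] with w hwB hwd
        have hBpos : 0 < norm (B w) := by
          simpa [norm_pos_iff] using hwB
        have : u w = q w := by simp [hu, hwB]
        rw [this, hq]
        simp only [norm_div]
        rw [div_le_iff₀ hBpos]
        exact hbound w hwd
      have h1 : Filter.Tendsto (fun w => norm (u w)) (nhdsWithin z {z}ᶜ)
          (nhds (norm (u z))) :=
        ((continuous_norm.continuousAt).comp hucont).continuousWithinAt.tendsto
      have h2 : Filter.Tendsto φ (nhdsWithin z {z}ᶜ) (nhds (φ z)) :=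
        hφcont.continuousWithinAt.tendsto
      exact le_of_tendsto_of_tendsto h1 h2 hevle
    · have hBpos : 0 < norm (B z) := by
        simpa [norm_pos_iff] using hBz
      have : u z = q z := by simp [hu, hBz]
      rw [this, hq]
      simp only [norm_div]
      rw [div_le_iff₀ hBpos]
      exact hbound z hz

lemma idealI2_subset_idealJ2 {f₁ f₂ : ℂ → ℂ} (hf₁ : Nev f₁) (hf₂ : Nev f₂) :
    idealI2 f₁ f₂ ⊆ idealJ2 f₁ f₂ := by
  rintro g ⟨h₁, h₂, hh₁, hh₂, hg⟩
  obtain ⟨B₁, hB₁, hb₁⟩ := hh₁.abs_le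
  obtain ⟨B₂, hB₂, hb₂⟩ := hh₂.abs_le
  obtain ⟨A₁, hA₁, ha₁⟩ := hf₁.abs_le
  obtain ⟨A₂, hA₂, ha₂⟩ := hf₂.abs_le
  have habs : ∀ z ∈ unitDisk, norm (g z)
      ≤ norm (f₁ z) * Real.exp (B₁ z) + norm (f₂ z) * Real.exp (B₂ z) := by
    intro z hz
    rw [hg z hz]
    calc norm (f₁ z * h₁ z + f₂ z * h₂ z)
        ≤ norm (f₁ z * h₁ z) + norm (f₂ z * h₂ z) := norm_add_le _ _
      _ = norm (f₁ z) * norm (h₁ z) + norm (f₂ z) * norm (h₂ z) := by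
          rw [norm_mul, norm_mul]
      _ ≤ _ := by
          have := hb₁ z hz; have := hb₂ z hz
          have := norm_nonneg (f₁ z); have := norm_nonneg (f₂ z)
          have := norm_nonneg (h₁ z); have := norm_nonneg (h₂ z)
          nlinarith
  constructor
  · -- Nev g
    constructor
    · apply DifferentiableOn.congr ((hf₁.1.mul hh₁.1).add (hf₂.1.mul hh₂.1))
      exact fun z hz => hg z hz
    · refine ⟨fun z => B₁ z + B₂ z + (A₁ z + A₂ z) + Real.log 2,
        posHarmonic_add (posHarmonic_add (posHarmonic_add hB₁ hB₂) (posHarmonic_add hA₁ hA₂))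
          (posHarmonic_const (Real.log_pos one_lt_two)), fun z hz => ?_⟩
      have hpos : 0 < B₁ z + B₂ z + (A₁ z + A₂ z) + Real.log 2 := by
        have := hB₁.2 z hz; have := hB₂.2 z hz; have := hA₁.2 z hz; have := hA₂.2 z hz
        have := Real.log_pos (by norm_num : (1:ℝ) < 2)
        linarith
      rcases eq_or_lt_of_le (norm_nonneg (g z)) with h0 | h0
      · rw [← h0, Real.log_zero]; exact hpos.le
      · rw [Real.log_le_iff_le_exp h0]
        have key : norm (g z) ≤ Real.exp (A₁ z) * Real.exp (B₁ z)
            + Real.exp (A₂ z) * Real.exp (B₂ z) := by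
          have h1 := habs z hz
          have := ha₁ z hz; have := ha₂ z hz
          have := (Real.exp_pos (B₁ z)).le; have := (Real.exp_pos (B₂ z)).le
          nlinarith
        refine key.trans ?_
        show Real.exp (A₁ z) * Real.exp (B₁ z) + Real.exp (A₂ z) * Real.exp (B₂ z)
          ≤ Real.exp (B₁ z + B₂ z + (A₁ z + A₂ z) + Real.log 2)
        rw [show B₁ z + B₂ z + (A₁ z + A₂ z) + Real.log 2
            = (A₁ z + B₁ z) + ((A₂ z + B₂ z) + Real.log 2) by ring, Real.exp_add, Real.exp_add,
          Real.exp_add, Real.exp_log (by norm_num : (0:ℝ) < 2)]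
        have e1 : Real.exp (A₁ z) * Real.exp (B₁ z) = Real.exp (A₁ z + B₁ z) :=
          (Real.exp_add _ _).symm
        have e2 : Real.exp (A₂ z) * Real.exp (B₂ z) = Real.exp (A₂ z + B₂ z) :=
          (Real.exp_add _ _).symm
        rw [e1, e2]
        have p1 := Real.exp_pos (A₁ z + B₁ z)
        have p2 := Real.exp_pos (A₂ z + B₂ z)
        have q1 : Real.exp (A₁ z + B₁ z) ≤ Real.exp (A₁ z + B₁ z) * Real.exp (A₂ z + B₂ z) := by
          nlinarith [Real.one_le_exp (by have := hA₂.2 z hz; have := hB₂.2 z hz; linarith :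
            (0:ℝ) ≤ A₂ z + B₂ z)]
        have q2 : Real.exp (A₂ z + B₂ z) ≤ Real.exp (A₁ z + B₁ z) * Real.exp (A₂ z + B₂ z) := by
          nlinarith [Real.one_le_exp (by have := hA₁.2 z hz; have := hB₁.2 z hz; linarith :
            (0:ℝ) ≤ A₁ z + B₁ z)]
        nlinarith
  · -- the J bound
    refine ⟨fun z => B₁ z + B₂ z, posHarmonic_add hB₁ hB₂, fun z hz => ?_⟩
    have h1 := habs z hz
    have hB₁p := hB₁.2 z hz
    have hB₂p := hB₂.2 z hz
    have e1 : Real.exp (B₁ z) ≤ Real.exp (B₁ z + B₂ z) := Real.exp_le_exp.2 (by linarith)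
    have e2 : Real.exp (B₂ z) ≤ Real.exp (B₁ z + B₂ z) := Real.exp_le_exp.2 (by linarith)
    have := norm_nonneg (f₁ z); have := norm_nonneg (f₂ z)
    nlinarith

theorem statement13 (f₁ f₂ g₁ g₂ : ℂ → ℂ) (Λ : ℕ → ℂ) (hΛ : BlaschkeSeq Λ)
    (hf₁ : Nev f₁) (hf₂ : Nev f₂) (hg₁ : Nev g₁) (hg₂ : Nev g₂)
    (hfac₁ : ∀ z ∈ unitDisk, f₁ z = blaschkeProduct Λ z * g₁ z)
    (hfac₂ : ∀ z ∈ unitDisk, f₂ z = blaschkeProduct Λ z * g₂ z)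
    (hnc : ∀ z ∈ unitDisk, g₁ z ≠ 0 ∨ g₂ z ≠ 0) :
    idealI2 f₁ f₂ = idealJ2 f₁ f₂ ↔ idealI2 g₁ g₂ = idealJ2 g₁ g₂ := by
  set B : ℂ → ℂ := blaschkeProduct Λ with hBdef
  -- B is holomorphic on the disk, being locally f₁/g₁ or f₂/g₂
  have hBdiff : DifferentiableOn ℂ B unitDisk := by
    intro z hz
    apply DifferentiableAt.differentiableWithinAt
    rcases hnc z hz with h | h
    · have ho : IsOpen (unitDisk ∩ g₁ ⁻¹' {0}ᶜ) :=
        (hg₁.1.continuousOn).isOpen_inter_preimage isOpen_unitDisk isOpen_compl_singleton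
      have hmem : unitDisk ∩ g₁ ⁻¹' {0}ᶜ ∈ nhds z := ho.mem_nhds ⟨hz, h⟩
      have hd : DifferentiableAt ℂ (fun w => f₁ w / g₁ w) z :=
        (hf₁.1.differentiableAt (isOpen_unitDisk.mem_nhds hz)).div
          (hg₁.1.differentiableAt (isOpen_unitDisk.mem_nhds hz)) h
      apply hd.congr_of_eventuallyEq
      filter_upwards [hmem] with w hw
      have hwg : g₁ w ≠ 0 := hw.2
      rw [hfac₁ w hw.1, mul_div_assoc, div_self hwg, mul_one]
    · have ho : IsOpen (unitDisk ∩ g₂ ⁻¹' {0}ᶜ) :=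
        (hg₂.1.continuousOn).isOpen_inter_preimage isOpen_unitDisk isOpen_compl_singleton
      have hmem : unitDisk ∩ g₂ ⁻¹' {0}ᶜ ∈ nhds z := ho.mem_nhds ⟨hz, h⟩
      have hd : DifferentiableAt ℂ (fun w => f₂ w / g₂ w) z :=
        (hf₂.1.differentiableAt (isOpen_unitDisk.mem_nhds hz)).div
          (hg₂.1.differentiableAt (isOpen_unitDisk.mem_nhds hz)) h
      apply hd.congr_of_eventuallyEq
      filter_upwards [hmem] with w hw
      have hwg : g₂ w ≠ 0 := hw.2
      rw [hfac₂ w hw.1, mul_div_assoc, div_self hwg, mul_one]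
  have hB1 : ∀ z ∈ unitDisk, norm (B z) ≤ 1 :=
    fun z hz => blaschkeProduct_abs_le_one Λ hΛ.1 hz
  have hBne : ∃ z ∈ unitDisk, B z ≠ 0 := exists_blaschkeProduct_ne_zero hΛ
  constructor
  · -- from I(f) = J(f) deduce I(g) = J(g)
    intro hf
    apply Set.Subset.antisymm (idealI2_subset_idealJ2 hg₁ hg₂)
    rintro u ⟨hNu, H, hH, hub⟩
    set v : ℂ → ℂ := fun z => B z * u z with hvdef
    obtain ⟨hudiff, Hu, hHu, hulog⟩ := hNu
    have huabs : ∀ z ∈ unitDisk, norm (u z) ≤ Real.exp (Hu z) := by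
      intro z hz
      rcases eq_or_lt_of_le (norm_nonneg (u z)) with h0 | h0
      · rw [← h0]; exact (Real.exp_pos _).le
      · exact (Real.log_le_iff_le_exp h0).1 (hulog z hz)
    have hNv : Nev v := by
      refine ⟨hBdiff.mul hudiff, Hu, hHu, fun z hz => ?_⟩
      have hvu : norm (v z) ≤ norm (u z) := by
        rw [hvdef]
        simp only [norm_mul]
        nlinarith [hB1 z hz, norm_nonneg (u z), norm_nonneg (B z)]
      rcases eq_or_lt_of_le (norm_nonneg (v z)) with h0 | h0
      · rw [← h0, Real.log_zero]; exact (hHu.2 z hz).le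
      · rw [Real.log_le_iff_le_exp h0]
        exact hvu.trans (huabs z hz)
    have hvJ : v ∈ idealJ2 f₁ f₂ := by
      refine ⟨hNv, H, hH, fun z hz => ?_⟩
      rw [hfac₁ z hz, hfac₂ z hz]
      have := hub z hz
      simp only [hvdef, norm_mul]
      nlinarith [norm_nonneg (B z), norm_nonneg (u z),
        norm_nonneg (g₁ z), norm_nonneg (g₂ z), Real.exp_pos (H z)]
    rw [← hf] at hvJ
    obtain ⟨h₁, h₂, hh₁, hh₂, heq⟩ := hvJ
    refine ⟨h₁, h₂, hh₁, hh₂, ?_⟩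
    set w : ℂ → ℂ := fun z => g₁ z * h₁ z + g₂ z * h₂ z with hwdef
    have hweq : ∀ z ∈ unitDisk, B z ≠ 0 → u z = w z := by
      intro z hz hB0
      have h1 : B z * u z = B z * w z := by
        have h2 := heq z hz
        rw [hfac₁ z hz, hfac₂ z hz] at h2
        calc B z * u z = v z := rfl
          _ = B z * g₁ z * h₁ z + B z * g₂ z * h₂ z := h2
          _ = B z * w z := by
              show _ = B z * (g₁ z * h₁ z + g₂ z * h₂ z)
              ring
      exact mul_left_cancel₀ hB0 h1
    intro z hz
    by_cases hB0 : B z = 0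
    · have hev := eventually_ne_of_ne hBdiff hBne hz
      have hdisk : ∀ᶠ x in nhdsWithin z {z}ᶜ, x ∈ unitDisk :=
        mem_nhdsWithin_of_mem_nhds (isOpen_unitDisk.mem_nhds hz)
      have heq' : ∀ᶠ x in nhdsWithin z {z}ᶜ, u x = w x := by
        filter_upwards [hev, hdisk] with x h1 h2
        exact hweq x h2 h1
      have hcu : Filter.Tendsto u (nhdsWithin z {z}ᶜ) (nhds (u z)) :=
        ((hudiff.differentiableAt (isOpen_unitDisk.mem_nhds hz)).continuousAt
          ).continuousWithinAt.tendsto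
      have hcw : Filter.Tendsto w (nhdsWithin z {z}ᶜ) (nhds (w z)) := by
        have : DifferentiableAt ℂ w z :=
          ((hg₁.1.differentiableAt (isOpen_unitDisk.mem_nhds hz)).mul
            (hh₁.1.differentiableAt (isOpen_unitDisk.mem_nhds hz))).add
          ((hg₂.1.differentiableAt (isOpen_unitDisk.mem_nhds hz)).mul
            (hh₂.1.differentiableAt (isOpen_unitDisk.mem_nhds hz)))
        exact this.continuousAt.continuousWithinAt.tendsto
      exact tendsto_nhds_unique' (by exact Filter.NeBot.mono inferInstance le_rfl)
        (hcu.congr' heq') hcw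
    · exact hweq z hz hB0
  · -- from I(g) = J(g) deduce I(f) = J(f)
    intro hg
    apply Set.Subset.antisymm (idealI2_subset_idealJ2 hf₁ hf₂)
    rintro v ⟨hNv, H, hH, hvb⟩
    set φ : ℂ → ℝ := fun z => Real.exp (H z) * (norm (g₁ z) + norm (g₂ z))
      with hφdef
    have hφc : ContinuousOn φ unitDisk := by
      apply ContinuousOn.mul
      · exact Real.continuous_exp.comp_continuousOn
          (fun z hz => (hH.continuousAt hz).continuousWithinAt)
      · exact (continuous_norm.comp_continuousOn hg₁.1.continuousOn).add
          (continuous_norm.comp_continuousOn hg₂.1.continuousOn)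
    have hbound : ∀ z ∈ unitDisk, norm (v z) ≤ φ z * norm (B z) := by
      intro z hz
      have h1 := hvb z hz
      rw [hfac₁ z hz, hfac₂ z hz] at h1
      simp only [norm_mul] at h1
      show norm (v z)
        ≤ Real.exp (H z) * (norm (g₁ z) + norm (g₂ z)) * norm (B z)
      nlinarith [norm_nonneg (B z), Real.exp_pos (H z)]
    obtain ⟨u, hud, huf, hub⟩ := nevFactorization hBdiff hBne hNv.1 hφc hbound
    have huJ : u ∈ idealJ2 g₁ g₂ := by
      obtain ⟨A₁, hA₁, ha₁⟩ := hg₁.abs_le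
      obtain ⟨A₂, hA₂, ha₂⟩ := hg₂.abs_le
      refine ⟨⟨hud, fun z => H z + (A₁ z + A₂ z) + Real.log 2,
        posHarmonic_add (posHarmonic_add hH (posHarmonic_add hA₁ hA₂))
          (posHarmonic_const (Real.log_pos one_lt_two)), fun z hz => ?_⟩,
        H, hH, fun z hz => hub z hz⟩
      have hpos : 0 < H z + (A₁ z + A₂ z) + Real.log 2 := by
        have := hH.2 z hz; have := hA₁.2 z hz; have := hA₂.2 z hz
        have := Real.log_pos (by norm_num : (1:ℝ) < 2)
        linarith
      rcases eq_or_lt_of_le (norm_nonneg (u z)) with h0 | h0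
      · rw [← h0, Real.log_zero]; exact hpos.le
      · rw [Real.log_le_iff_le_exp h0]
        have key := (hub z hz).trans (show φ z ≤ Real.exp (H z + (A₁ z + A₂ z) + Real.log 2) by
          show Real.exp (H z) * (norm (g₁ z) + norm (g₂ z))
            ≤ Real.exp (H z + (A₁ z + A₂ z) + Real.log 2)
          rw [show H z + (A₁ z + A₂ z) + Real.log 2
            = H z + (A₁ z + (A₂ z + Real.log 2)) by ring, Real.exp_add, Real.exp_add,
            Real.exp_add, Real.exp_log (by norm_num : (0:ℝ) < 2)]
          have p1 := Real.exp_pos (A₁ z); have p2 := Real.exp_pos (A₂ z)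
          have p3 := Real.exp_pos (H z)
          have q1 : (1:ℝ) ≤ Real.exp (A₁ z) := Real.one_le_exp (hA₁.2 z hz).le
          have q2 : (1:ℝ) ≤ Real.exp (A₂ z) := Real.one_le_exp (hA₂.2 z hz).le
          have r1 := ha₁ z hz; have r2 := ha₂ z hz
          have s1 := norm_nonneg (g₁ z); have s2 := norm_nonneg (g₂ z)
          have hsum : norm (g₁ z) + norm (g₂ z)
              ≤ Real.exp (A₁ z) * (Real.exp (A₂ z) * 2) := by nlinarith
          calc Real.exp (H z) * (norm (g₁ z) + norm (g₂ z))
              ≤ Real.exp (H z) * (Real.exp (A₁ z) * (Real.exp (A₂ z) * 2)) :=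
                mul_le_mul_of_nonneg_left hsum p3.le
            _ = _ := by ring)
        exact key
    rw [← hg] at huJ
    obtain ⟨h₁, h₂, hh₁, hh₂, hueq⟩ := huJ
    refine ⟨h₁, h₂, hh₁, hh₂, fun z hz => ?_⟩
    rw [huf z hz, hueq z hz, hfac₁ z hz, hfac₂ z hz]
    ring

end
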